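/- arXiv:1108.3444 — 3 statements merged into one kernel-verified Lean document; each statement's English description precedes it below -/
import Mathlib

section
/- If G is a gap-critical graph, then G has no simplicial vertex (a vertex whose neighborhood induces a complete graph). -/
open SimpleGraph

/-- Independence number: maximum size of an independent (stable) set. -/
noncomputable def indepNum {V : Type*} [Fintype V] (G : SimpleGraph V) : ℕ :=
  sSup {n | ∃ s : Finset V, (s : Set V).Pairwise (fun a b => ¬ G.Adj a b) ∧ s.card = n}

/-- Clique cover number: minimum number of cliques covering all vertices. -/
noncomputable def cliqueCoverNum {V : Type*} [Fintype V] (G : SimpleGraph V) : ℕ :=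
  sInf {n | ∃ P : Finset (Finset V),
    (∀ c ∈ P, G.IsClique (c : Set V)) ∧ (∀ v : V, ∃ c ∈ P, v ∈ c) ∧ P.card = n}

/-- The (covering) gap of a graph: θ(G) - α(G). -/
noncomputable def gap {V : Type*} [Fintype V] (G : SimpleGraph V) : ℕ :=
  cliqueCoverNum G - _root_.indepNum G

/-- A graph is gap-critical if every proper induced subgraph has strictly smaller gap. -/
def GapCritical {V : Type*} [Fintype V] (G : SimpleGraph V) : Prop :=
  ∀ s : Finset V, s ≠ Finset.univ → gap (G.induce (s : Set V)) < gap G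

lemma indep_bddAbove {V : Type*} [Fintype V] (G : SimpleGraph V) :
    BddAbove {n | ∃ s : Finset V, (s : Set V).Pairwise (fun a b => ¬ G.Adj a b) ∧ s.card = n} := by
  refine ⟨Fintype.card V, fun n hn => ?_⟩
  obtain ⟨s, -, rfl⟩ := hn
  simpa using Finset.card_le_card (Finset.subset_univ s)

lemma clique_nonempty {V : Type*} [Fintype V] (G : SimpleGraph V) :
    {n | ∃ P : Finset (Finset V),
      (∀ c ∈ P, G.IsClique (c : Set V)) ∧ (∀ v : V, ∃ c ∈ P, v ∈ c) ∧ P.card = n}.Nonempty := by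
  classical
  refine ⟨_, Finset.univ.image (fun v => ({v} : Finset V)), ?_, ?_, rfl⟩
  · intro c hc
    simp only [Finset.mem_image] at hc
    obtain ⟨v, -, rfl⟩ := hc
    rw [Finset.coe_singleton]
    exact G.isClique_singleton v
  · intro v
    exact ⟨{v}, Finset.mem_image_of_mem _ (Finset.mem_univ v), Finset.mem_singleton_self v⟩

theorem gapCritical_no_simplicial {V : Type*} [Fintype V] (G : SimpleGraph V)
    (hG : GapCritical G) : ∀ v : V, ¬ G.IsClique (G.neighborSet v) := by
  intro v hv
  classical
  set N : Finset V := insert v (G.neighborFinset v) with hN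
  set s : Finset V := Finset.univ \ N with hs
  have hvN : v ∈ N := Finset.mem_insert_self _ _
  have hvs : v ∉ s := by simp [hs, hvN]
  have hsne : s ≠ Finset.univ := by
    intro h
    exact hvs (h ▸ Finset.mem_univ v)
  have hlt := hG s hsne
  set H := G.induce (s : Set V) with hH
  -- adjacency in H
  have hadj : ∀ a b : (s : Set V), H.Adj a b ↔ G.Adj a.1 b.1 := fun a b => Iff.rfl
  -- members of s are not v and not neighbors of v
  have hmem : ∀ u : V, u ∈ s → u ≠ v ∧ ¬ G.Adj v u := by
    intro u hu
    simp only [hs, hN, Finset.mem_sdiff, Finset.mem_univ, true_and, Finset.mem_insert,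
      SimpleGraph.mem_neighborFinset, not_or] at hu
    exact ⟨hu.1, hu.2⟩
  -- θ(G) ≤ θ(H) + 1
  have hθ : cliqueCoverNum G ≤ cliqueCoverNum H + 1 := by
    have hne := clique_nonempty H
    obtain ⟨P, hP1, hP2, hP3⟩ := Nat.sInf_mem hne
    set Q : Finset (Finset V) :=
      insert N (P.image (fun c => c.image (fun x => x.1))) with hQ
    have hQclique : ∀ c ∈ Q, G.IsClique (c : Set V) := by
      intro c hc
      rcases Finset.mem_insert.1 hc with rfl | hc
      · -- N is a clique
        rw [hN]
        intro a ha b hb hab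
        simp only [Finset.coe_insert, Set.mem_insert_iff, Finset.mem_coe,
          SimpleGraph.mem_neighborFinset] at ha hb
        rcases ha with rfl | ha
        · rcases hb with rfl | hb
          · exact absurd rfl hab
          · exact hb
        · rcases hb with rfl | hb
          · exact ha.symm
          · exact hv ha hb hab
      · obtain ⟨c', hc', rfl⟩ := Finset.mem_image.1 hc
        intro a ha b hb hab
        simp only [Finset.coe_image, Set.mem_image, Finset.mem_coe] at ha hb
        obtain ⟨a', ha', rfl⟩ := ha
        obtain ⟨b', hb', rfl⟩ := hb
        have hab' : a' ≠ b' := fun h => hab (by rw [h])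
        have ha'' : a' ∈ (c' : Set ((s : Set V) : Type _)) := ha'
        have hb'' : b' ∈ (c' : Set ((s : Set V) : Type _)) := hb'
        have := hP1 c' hc' ha'' hb'' hab'
        exact this
    have hQcover : ∀ u : V, ∃ c ∈ Q, u ∈ c := by
      intro u
      by_cases hu : u ∈ N
      · exact ⟨N, Finset.mem_insert_self _ _, hu⟩
      · have hus : u ∈ s := by simp [hs, hu]
        obtain ⟨c, hc, huc⟩ := hP2 ⟨u, hus⟩
        refine ⟨c.image (fun x => x.1),
          Finset.mem_insert_of_mem (Finset.mem_image_of_mem _ hc), ?_⟩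
        exact Finset.mem_image_of_mem (fun x => x.1) huc
    have h1 : cliqueCoverNum G ≤ Q.card := Nat.sInf_le ⟨Q, hQclique, hQcover, rfl⟩
    have hPc : P.card = cliqueCoverNum H := hP3
    have h2 : Q.card ≤ P.card + 1 := by
      calc Q.card ≤ (P.image (fun c => c.image (fun x => x.1))).card + 1 :=
            Finset.card_insert_le _ _
        _ ≤ P.card + 1 := by gcongr; exact Finset.card_image_le
    omega
  -- α(H) + 1 ≤ α(G)
  have hα : _root_.indepNum H + 1 ≤ _root_.indepNum G := by
    have hne : {n | ∃ t : Finset (s : Set V),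
        (t : Set (s : Set V)).Pairwise (fun a b => ¬ H.Adj a b) ∧ t.card = n}.Nonempty :=
      ⟨0, ∅, by simp⟩
    obtain ⟨t, ht1, ht2⟩ := Nat.sSup_mem hne (indep_bddAbove H)
    have ht2' : t.card = _root_.indepNum H := ht2
    let t' : Finset V := insert v (t.image Subtype.val)
    have ht' : t' = insert v (t.image Subtype.val) := rfl
    have hvim : v ∉ t.image Subtype.val := by
      intro h
      obtain ⟨x, -, hx⟩ := Finset.mem_image.1 h
      exact hvs (hx ▸ x.2)
    have hpair : (t' : Set V).Pairwise (fun a b => ¬ G.Adj a b) := by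
      intro a ha b hb hab
      simp only [ht', Finset.coe_insert, Set.mem_insert_iff, Finset.mem_coe,
        Finset.mem_image] at ha hb
      rcases ha with rfl | ⟨a', ha', rfl⟩
      · rcases hb with rfl | ⟨b', hb', rfl⟩
        · exact absurd rfl hab
        · exact (hmem _ b'.2).2
      · rcases hb with rfl | ⟨b', hb', rfl⟩
        · exact fun h => (hmem _ a'.2).2 h.symm
        · have hab' : a' ≠ b' := fun h => hab (by rw [h])
          exact ht1 ha' hb' hab'
    have hcard : t'.card = t.card + 1 := by
      rw [ht', Finset.card_insert_of_notMem hvim,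
        Finset.card_image_of_injective _ Subtype.val_injective]
    have := le_csSup (indep_bddAbove G) (a := t'.card) ⟨t', hpair, rfl⟩
    rw [hcard, ht2'] at this
    exact this
  have : gap G ≤ gap H := by
    unfold gap
    omega
  omega
end

section
/- Let G be a graph with α(G) ≤ 2 such that there exists a vertex v for which the subgraph induced on the neighborhood N(v) is perfect. Then gap(G) ≤ 1. -/
open SimpleGraph

/-- A graph is perfect when every induced subgraph satisfies θ = α. -/
def IsPerfect {W : Type*} [Fintype W] (H : SimpleGraph W) : Prop :=
  ∀ s : Finset W, cliqueCoverNum (H.induce (s : Set W)) = _root_.indepNum (H.induce (s : Set W))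

lemma indep_le_indepNum {V : Type*} [Fintype V] (G : SimpleGraph V) {s : Finset V}
    (h : (s : Set V).Pairwise (fun a b => ¬ G.Adj a b)) : s.card ≤ _root_.indepNum G := by
  apply le_csSup
  · refine ⟨Fintype.card V, ?_⟩
    rintro n ⟨t, -, rfl⟩
    exact Finset.card_le_univ t
  · exact ⟨s, h, rfl⟩

lemma cliqueCoverNum_le_card {V : Type*} [Fintype V] (G : SimpleGraph V)
    {P : Finset (Finset V)} (h1 : ∀ c ∈ P, G.IsClique (c : Set V))
    (h2 : ∀ w : V, ∃ c ∈ P, w ∈ c) : cliqueCoverNum G ≤ P.card :=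
  Nat.sInf_le ⟨P, h1, h2, rfl⟩

lemma exists_min_cover {V : Type*} [Fintype V] (G : SimpleGraph V) :
    ∃ P : Finset (Finset V), (∀ c ∈ P, G.IsClique (c : Set V)) ∧
      (∀ w : V, ∃ c ∈ P, w ∈ c) ∧ P.card = cliqueCoverNum G := by
  classical
  have hne : {n | ∃ P : Finset (Finset V),
      (∀ c ∈ P, G.IsClique (c : Set V)) ∧ (∀ v : V, ∃ c ∈ P, v ∈ c) ∧ P.card = n}.Nonempty := by
    refine ⟨_, Finset.univ.image (fun w => ({w} : Finset V)), ?_, ?_, rfl⟩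
    · intro c hc
      simp only [Finset.mem_image] at hc
      obtain ⟨w, -, rfl⟩ := hc
      simp [SimpleGraph.isClique_iff, Set.pairwise_singleton]
    · intro w
      exact ⟨{w}, Finset.mem_image_of_mem _ (Finset.mem_univ w), Finset.mem_singleton_self w⟩
  obtain ⟨P, h1, h2, h3⟩ := Nat.sInf_mem hne
  exact ⟨P, h1, h2, h3⟩

theorem gap_le_one_of_perfect_neighborhood {V : Type*} [Fintype V] (G : SimpleGraph V)
    [DecidableRel G.Adj] (hα : _root_.indepNum G ≤ 2) (v : V)
    (hperf : IsPerfect (G.induce (G.neighborSet v))) :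
    gap G ≤ 1 := by
  classical
  rw [gap, tsub_le_iff_right]
  -- θ(G) ≤ 1 + α(G)
  set N : Set V := G.neighborSet v with hN
  set H : SimpleGraph N := G.induce N with hHdef
  -- The set of non-neighbors of v (other than v) forms a clique.
  set K : Finset V := Finset.univ.filter (fun w => ¬ G.Adj v w ∧ w ≠ v) with hKdef
  have hK : G.IsClique (K : Set V) := by
    intro a ha b hb hab
    simp only [hKdef, Finset.coe_filter, Set.mem_setOf_eq, Finset.mem_univ, true_and] at ha hb
    by_contra hadj
    -- {v, a, b} is independent of size 3
    have hpair : (({v, a, b} : Finset V) : Set V).Pairwise (fun x y => ¬ G.Adj x y) := by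
      intro x hx y hy hxy
      simp only [Finset.coe_insert, Set.mem_insert_iff, Finset.coe_singleton,
        Set.mem_singleton_iff] at hx hy
      rcases hx with rfl | rfl | rfl <;> rcases hy with rfl | rfl | rfl <;>
        first
          | exact absurd rfl hxy
          | exact ha.1
          | exact hb.1
          | exact fun h => ha.1 h.symm
          | exact fun h => hb.1 h.symm
          | exact hadj
          | exact fun h => hadj h.symm
    have hcard : ({v, a, b} : Finset V).card = 3 := by
      rw [Finset.card_insert_of_notMem, Finset.card_insert_of_notMem, Finset.card_singleton]
      · simp [hab]
      · simp only [Finset.mem_insert, Finset.mem_singleton]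
        push_neg
        exact ⟨fun h => ha.2 h.symm, fun h => hb.2 h.symm⟩
    have := indep_le_indepNum G hpair
    omega
  obtain ⟨P, hPclique, hPcover, hPcard⟩ := exists_min_cover H
  by_cases hP : P = ∅
  · -- neighborhood is empty
    have hNadj : ∀ w, ¬ G.Adj v w := by
      intro w hw
      obtain ⟨c, hc, -⟩ := hPcover ⟨w, hw⟩
      simp [hP] at hc
    by_cases hKe : K = ∅
    · -- only vertex is v, cover by {{v}}
      have hθ : cliqueCoverNum G ≤ ({({v} : Finset V)} : Finset (Finset V)).card := by
        apply cliqueCoverNum_le_card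
        · intro c hc
          simp only [Finset.mem_singleton] at hc
          subst hc
          simp [SimpleGraph.isClique_iff, Set.pairwise_singleton]
        · intro w
          refine ⟨{v}, Finset.mem_singleton_self _, ?_⟩
          have : w = v := by
            by_contra hwv
            have : w ∈ K := by
              simp [hKdef, hwv, fun h => hNadj w h]
            rw [hKe] at this
            simp at this
          simp [this]
      simp only [Finset.card_singleton] at hθ
      omega
    · -- K nonempty: α(G) ≥ 2 and cover by {{v}, K}
      obtain ⟨w, hw⟩ := Finset.nonempty_iff_ne_empty.mpr hKe
      simp only [hKdef, Finset.mem_filter, Finset.mem_univ, true_and] at hw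
      have hα2 : 2 ≤ _root_.indepNum G := by
        have hpair : (({v, w} : Finset V) : Set V).Pairwise (fun x y => ¬ G.Adj x y) := by
          intro x hx y hy hxy
          simp only [Finset.coe_insert, Set.mem_insert_iff, Finset.coe_singleton,
            Set.mem_singleton_iff] at hx hy
          rcases hx with rfl | rfl <;> rcases hy with rfl | rfl <;>
            first
              | exact absurd rfl hxy
              | exact hw.1
              | exact fun h => hw.1 h.symm
        have hcard : ({v, w} : Finset V).card = 2 := by
          rw [Finset.card_insert_of_notMem, Finset.card_singleton]
          simp [Ne.symm hw.2]
        have := indep_le_indepNum G hpair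
        omega
      have hθ : cliqueCoverNum G ≤ ({({v} : Finset V), K} : Finset (Finset V)).card := by
        apply cliqueCoverNum_le_card
        · intro c hc
          simp only [Finset.mem_insert, Finset.mem_singleton] at hc
          rcases hc with rfl | rfl
          · simp [SimpleGraph.isClique_iff, Set.pairwise_singleton]
          · exact hK
        · intro u
          by_cases huv : u = v
          · exact ⟨{v}, by simp, by simp [huv]⟩
          · refine ⟨K, by simp, ?_⟩
            simp [hKdef, huv, fun h => hNadj u h]
      have : ({({v} : Finset V), K} : Finset (Finset V)).card ≤ 2 :=
        Finset.card_insert_le _ _ |>.trans (by simp)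
      omega
  · -- P nonempty: cover G by (insert v ∘ lift) '' P together with K
    obtain ⟨c₀, hc₀⟩ := Finset.nonempty_iff_ne_empty.mpr hP
    set f : Finset N → Finset V := fun c => insert v (c.image (Subtype.val)) with hf
    have hθ : cliqueCoverNum G ≤ (P.image f ∪ {K}).card := by
      apply cliqueCoverNum_le_card
      · intro c hc
        simp only [Finset.mem_union, Finset.mem_image, Finset.mem_singleton] at hc
        rcases hc with ⟨d, hd, rfl⟩ | rfl
        · -- insert v (image val d) is a clique
          rw [hf]
          simp only [Finset.coe_insert, Finset.coe_image]
          apply SimpleGraph.IsClique.insert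
          · intro a ha b hb hab
            simp only [Set.mem_image, Finset.mem_coe] at ha hb
            obtain ⟨x, hx, rfl⟩ := ha
            obtain ⟨y, hy, rfl⟩ := hb
            have hxy : x ≠ y := fun h => hab (by rw [h])
            exact hPclique d hd hx hy hxy
          · intro b hb hbv
            simp only [Set.mem_image, Finset.mem_coe] at hb
            obtain ⟨x, -, rfl⟩ := hb
            exact x.property
        · exact hK
      · intro u
        by_cases huN : u ∈ N
        · obtain ⟨c, hc, huc⟩ := hPcover ⟨u, huN⟩
          refine ⟨f c, Finset.mem_union_left _ (Finset.mem_image_of_mem f hc), ?_⟩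
          rw [hf]
          exact Finset.mem_insert_of_mem (Finset.mem_image_of_mem _ huc)
        · by_cases huv : u = v
          · refine ⟨f c₀, Finset.mem_union_left _ (Finset.mem_image_of_mem f hc₀), ?_⟩
            rw [hf, huv]
            exact Finset.mem_insert_self _ _
          · refine ⟨K, Finset.mem_union_right _ (Finset.mem_singleton_self K), ?_⟩
            simp only [hKdef, Finset.mem_filter, Finset.mem_univ, true_and]
            exact ⟨huN, huv⟩
    have hcard2 : (P.image f ∪ {K}).card ≤ cliqueCoverNum H + 1 := by
      calc (P.image f ∪ {K}).card ≤ (P.image f).card + ({K} : Finset (Finset V)).card :=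
            Finset.card_union_le _ _
        _ ≤ P.card + 1 := by
            simp only [Finset.card_singleton]
            exact Nat.add_le_add_right (Finset.card_image_le) 1
        _ = cliqueCoverNum H + 1 := by rw [hPcard]
    -- θ(H) ≤ θ(H') = α(H') ≤ α(G), where H' = H.induce univ
    have hHH' : cliqueCoverNum H ≤
        cliqueCoverNum (H.induce ((Finset.univ : Finset N) : Set N)) := by
      obtain ⟨P', h1', h2', h3'⟩ := exists_min_cover (H.induce ((Finset.univ : Finset N) : Set N))
      set g : Finset ((Finset.univ : Finset N) : Set N) → Finset N :=
        fun c => c.image (Subtype.val) with hg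
      have : cliqueCoverNum H ≤ (P'.image g).card := by
        apply cliqueCoverNum_le_card
        · intro c hc
          simp only [Finset.mem_image] at hc
          obtain ⟨d, hd, rfl⟩ := hc
          intro a ha b hb hab
          simp only [hg, Finset.coe_image, Set.mem_image, Finset.mem_coe] at ha hb
          obtain ⟨x, hx, rfl⟩ := ha
          obtain ⟨y, hy, rfl⟩ := hb
          have hxy : x ≠ y := fun h => hab (by rw [h])
          exact h1' d hd hx hy hxy
        · intro w
          obtain ⟨c, hc, hwc⟩ := h2' ⟨w, by simp⟩
          refine ⟨g c, Finset.mem_image_of_mem g hc, ?_⟩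
          simp only [hg, Finset.mem_image]
          exact ⟨⟨w, by simp⟩, hwc, rfl⟩
      calc cliqueCoverNum H ≤ (P'.image g).card := this
        _ ≤ P'.card := Finset.card_image_le
        _ = _ := h3'
    have hperfU := hperf (Finset.univ : Finset N)
    have hαH' : _root_.indepNum (H.induce ((Finset.univ : Finset N) : Set N)) ≤ _root_.indepNum G := by
      apply csSup_le
      · exact ⟨0, ∅, by simp⟩
      · rintro n ⟨s, hs, rfl⟩
        set e : ((Finset.univ : Finset N) : Set N) → V := fun x => (x.val.val : V) with he
        have hinj : Set.InjOn e s := by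
          intro x _ y _ hxy
          exact Subtype.val_injective (Subtype.val_injective hxy)
        have hcard : (s.image e).card = s.card := Finset.card_image_of_injOn hinj
        have hpair : ((s.image e : Finset V) : Set V).Pairwise (fun a b => ¬ G.Adj a b) := by
          intro a ha b hb hab
          simp only [Finset.coe_image, Set.mem_image, Finset.mem_coe] at ha hb
          obtain ⟨x, hx, rfl⟩ := ha
          obtain ⟨y, hy, rfl⟩ := hb
          have hxy : x ≠ y := fun h => hab (by rw [h])
          exact hs hx hy hxy
        rw [← hcard]
        exact indep_le_indepNum G hpair
    have hchain : cliqueCoverNum H ≤ _root_.indepNum G := by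
      calc cliqueCoverNum H ≤ _ := hHH'
        _ = _ := hperfU
        _ ≤ _root_.indepNum G := hαH'
    omega
end

section
/- Let G be a graph with gap(G) = t on n vertices. Then n ≥ 2t + α₂(2t), where α₂(m) is the minimum independence number over triangle-free graphs on m vertices; in particular s(t) ≥ 2t. -/
open SimpleGraph

/-- α₂(n): minimum independence number over triangle-free graphs on n vertices. -/
noncomputable def alphaN (n : ℕ) : ℕ :=
  sInf {k | ∃ G : SimpleGraph (Fin n), G.CliqueFree 3 ∧ _root_.indepNum G = k}

/-- s(t): smallest number of vertices of a graph with gap t. -/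
noncomputable def sFun (t : ℕ) : ℕ :=
  sInf {n | ∃ G : SimpleGraph (Fin n), gap G = t}

section Basics
variable {V W : Type*} [Fintype V] [Fintype W] {G : SimpleGraph V} {H : SimpleGraph W}

def IsIndep (G : SimpleGraph V) (s : Finset V) : Prop :=
  (s : Set V).Pairwise (fun a b => ¬ G.Adj a b)

def IsCover (G : SimpleGraph V) (P : Finset (Finset V)) : Prop :=
  (∀ c ∈ P, G.IsClique (c : Set V)) ∧ (∀ v : V, ∃ c ∈ P, v ∈ c)

lemma bddAbove_indepSet (G : SimpleGraph V) :
    BddAbove {n | ∃ s : Finset V, (s : Set V).Pairwise (fun a b => ¬ G.Adj a b) ∧ s.card = n} :=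
  ⟨Fintype.card V, by rintro n ⟨s, -, rfl⟩; exact s.card_le_univ⟩

lemma le_indepNum {s : Finset V} (hs : IsIndep G s) : s.card ≤ _root_.indepNum G :=
  le_csSup (bddAbove_indepSet G) ⟨s, hs, rfl⟩

lemma exists_indep (G : SimpleGraph V) : ∃ s : Finset V, IsIndep G s ∧ s.card = _root_.indepNum G := by
  have h := Nat.sSup_mem (s := {n | ∃ s : Finset V, (s : Set V).Pairwise (fun a b => ¬ G.Adj a b) ∧ s.card = n})
    ⟨0, ∅, by simp, by simp⟩ (bddAbove_indepSet G)
  obtain ⟨s, hs, hc⟩ := h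
  exact ⟨s, hs, hc⟩

lemma indepNum_le_card (G : SimpleGraph V) : _root_.indepNum G ≤ Fintype.card V := by
  obtain ⟨s, -, hc⟩ := exists_indep G
  rw [← hc]; exact s.card_le_univ

lemma cliqueCoverNum_le {P : Finset (Finset V)} (hP : IsCover G P) :
    cliqueCoverNum G ≤ P.card :=
  Nat.sInf_le ⟨P, hP.1, hP.2, rfl⟩

lemma singletons_cover (G : SimpleGraph V) : ∃ P : Finset (Finset V), IsCover G P ∧ P.card ≤ Fintype.card V := by
  classical
  refine ⟨Finset.univ.image fun v => {v}, ⟨?_, ?_⟩, ?_⟩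
  · rintro c hc
    simp only [Finset.mem_image] at hc
    obtain ⟨v, -, rfl⟩ := hc
    simp [SimpleGraph.isClique_singleton]
  · intro v; exact ⟨{v}, Finset.mem_image_of_mem _ (Finset.mem_univ v), Finset.mem_singleton_self v⟩
  · exact (Finset.card_image_le).trans (by simp)

lemma exists_cover (G : SimpleGraph V) : ∃ P : Finset (Finset V), IsCover G P ∧ P.card = cliqueCoverNum G := by
  obtain ⟨P₀, hP₀, -⟩ := singletons_cover G
  have h := Nat.sInf_mem (s := {n | ∃ P : Finset (Finset V),
    (∀ c ∈ P, G.IsClique (c : Set V)) ∧ (∀ v : V, ∃ c ∈ P, v ∈ c) ∧ P.card = n}) ⟨P₀.card, P₀, hP₀.1, hP₀.2, rfl⟩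
  obtain ⟨P, h1, h2, h3⟩ := h
  exact ⟨P, ⟨h1, h2⟩, h3⟩

lemma cliqueCoverNum_le_card_s17 (G : SimpleGraph V) : cliqueCoverNum G ≤ Fintype.card V := by
  obtain ⟨P, hP, hc⟩ := singletons_cover G
  exact (cliqueCoverNum_le hP).trans hc

lemma indepNum_le_cliqueCoverNum (G : SimpleGraph V) : _root_.indepNum G ≤ cliqueCoverNum G := by
  classical
  obtain ⟨s, hs, hsc⟩ := exists_indep G
  obtain ⟨P, hP, hPc⟩ := exists_cover G
  rw [← hsc, ← hPc]
  have : ∀ v ∈ s, ∃ c ∈ P, v ∈ c := fun v _ => hP.2 v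
  choose f hf1 hf2 using this
  refine Finset.card_le_card_of_injOn (fun v => if h : v ∈ s then f v h else ∅) ?_ ?_
  · intro v hv; simp [Finset.mem_coe.mp hv, hf1]
  · intro a ha b hb hab
    simp only [Finset.mem_coe] at ha hb
    simp only [dif_pos ha, dif_pos hb] at hab
    by_contra hne
    have hb' : b ∈ f a ha := by rw [hab]; exact hf2 b hb
    have hadj := hP.1 _ (hf1 a ha) (Finset.mem_coe.mpr (hf2 a ha)) (Finset.mem_coe.mpr hb') hne
    exact hs ha hb hne hadj

lemma indepNum_le_of_embedding (f : G ↪g H) : _root_.indepNum G ≤ _root_.indepNum H := by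
  obtain ⟨s, hs, hc⟩ := exists_indep G
  rw [← hc]
  have : IsIndep H (s.map f.toEmbedding) := by
    rintro x hx y hy hne
    simp only [Finset.coe_map, Set.mem_image, Finset.mem_coe] at hx hy
    obtain ⟨a, ha, rfl⟩ := hx
    obtain ⟨b, hb, rfl⟩ := hy
    have hab : a ≠ b := fun h => hne (by rw [h])
    intro hadj
    exact hs ha hb hab (f.map_rel_iff.mp hadj)
  calc s.card = (s.map f.toEmbedding).card := (Finset.card_map _).symm
    _ ≤ _root_.indepNum H := le_indepNum this

lemma indepNum_eq_of_iso (e : G ≃g H) : _root_.indepNum G = _root_.indepNum H :=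
  le_antisymm (indepNum_le_of_embedding e.toEmbedding) (indepNum_le_of_embedding e.symm.toEmbedding)

lemma cliqueCoverNum_le_of_iso (e : G ≃g H) : cliqueCoverNum H ≤ cliqueCoverNum G := by
  classical
  obtain ⟨P, hP, hPc⟩ := exists_cover G
  rw [← hPc]
  have hcov : IsCover H (P.image (Finset.map e.toEmbedding.toEmbedding)) := by
    constructor
    · rintro c hc
      simp only [Finset.mem_image] at hc
      obtain ⟨c₀, hc₀, rfl⟩ := hc
      rintro x hx y hy hne
      simp only [Finset.coe_map, Set.mem_image, Finset.mem_coe] at hx hy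
      obtain ⟨a, ha, rfl⟩ := hx
      obtain ⟨b, hb, rfl⟩ := hy
      have hab : a ≠ b := fun h => hne (by rw [h])
      exact e.map_adj_iff.mpr (hP.1 c₀ hc₀ ha hb hab)
    · intro w
      obtain ⟨c, hc, hv⟩ := hP.2 (e.symm w)
      refine ⟨c.map e.toEmbedding.toEmbedding, Finset.mem_image_of_mem _ hc, ?_⟩
      simp only [Finset.mem_map]
      exact ⟨e.symm w, hv, by simp⟩
  exact (cliqueCoverNum_le hcov).trans Finset.card_image_le

lemma cliqueCoverNum_eq_of_iso (e : G ≃g H) : cliqueCoverNum G = cliqueCoverNum H :=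
  le_antisymm (cliqueCoverNum_le_of_iso e.symm) (cliqueCoverNum_le_of_iso e)

end Basics

section Induced
variable {V W : Type*} [Fintype V] [Fintype W] {G : SimpleGraph V}

def embComap (f : W ↪ V) (G : SimpleGraph V) : G.comap f ↪g G := ⟨f, by simp⟩

def isoComap (e : W ≃ V) (G : SimpleGraph V) : G.comap e ≃g G := ⟨e, by simp⟩

lemma aux_card (s : Finset V) [Fintype ↥{v | v ∉ s}] :
    Fintype.card ↥{v | v ∉ s} + s.card = Fintype.card V := by
  classical
  have h1 : Fintype.card ↥{v | v ∉ s} = Fintype.card {v // ¬ v ∈ s} :=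
    Fintype.card_congr (Equiv.refl _)
  rw [h1, Fintype.card_subtype_compl]
  have h2 : Fintype.card {v // v ∈ s} = s.card := Fintype.card_coe s
  rw [h2]
  have := s.card_le_univ
  omega

lemma indepNum_induce_le (s : Set V) [Fintype ↥s] : _root_.indepNum (G.induce s) ≤ _root_.indepNum G :=
  indepNum_le_of_embedding (SimpleGraph.Embedding.induce s)

lemma cliqueCoverNum_le_induce (s : Finset V) (hs : G.IsClique (s : Set V))
    [Fintype ↥{v | v ∉ s}] :
    cliqueCoverNum G ≤ cliqueCoverNum (G.induce {v | v ∉ s}) + 1 := by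
  classical
  obtain ⟨P', hP', hc'⟩ := exists_cover (G.induce {v | v ∉ s})
  set emb : ↥{v | v ∉ s} ↪ V := Function.Embedding.subtype _ with hemb
  have hcov : IsCover G (insert s (P'.image (Finset.map emb))) := by
    constructor
    · intro c hc
      rcases Finset.mem_insert.mp hc with rfl | hc
      · exact hs
      · simp only [Finset.mem_image] at hc
        obtain ⟨c₀, hc₀, rfl⟩ := hc
        rintro x hx y hy hne
        simp only [Finset.coe_map, Set.mem_image, Finset.mem_coe] at hx hy
        obtain ⟨a, ha, rfl⟩ := hx
        obtain ⟨b, hb, rfl⟩ := hy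
        have hab : a ≠ b := fun h => hne (by rw [h])
        have := hP'.1 c₀ hc₀ (Finset.mem_coe.mpr ha) (Finset.mem_coe.mpr hb) hab
        exact this
    · intro v
      by_cases hv : v ∈ s
      · exact ⟨s, Finset.mem_insert_self _ _, hv⟩
      · obtain ⟨c, hc, hvc⟩ := hP'.2 ⟨v, hv⟩
        refine ⟨c.map emb, Finset.mem_insert_of_mem (Finset.mem_image_of_mem _ hc), ?_⟩
        simp only [Finset.mem_map]
        exact ⟨⟨v, hv⟩, hvc, rfl⟩
  calc cliqueCoverNum G ≤ (insert s (P'.image (Finset.map emb))).card := cliqueCoverNum_le hcov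
    _ ≤ (P'.image (Finset.map emb)).card + 1 := Finset.card_insert_le _ _
    _ ≤ P'.card + 1 := by have := Finset.card_image_le (s := P') (f := Finset.map emb); omega
    _ = cliqueCoverNum (G.induce {v | v ∉ s}) + 1 := by rw [hc']

end Induced

lemma matching_bound : ∀ n : ℕ, ∀ (V : Type) [Fintype V], ∀ (G : SimpleGraph V),
    Fintype.card V = n → ∃ ν, cliqueCoverNum G + ν ≤ n ∧ n ≤ _root_.indepNum G + 2 * ν ∧ 2 * ν ≤ n := by
  intro n
  induction n using Nat.strong_induction_on with
  | _ n IH =>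
    intro V _ G hn
    by_cases hE : ∃ x y, G.Adj x y
    · obtain ⟨x, y, hxy⟩ := hE
      classical
      set s : Finset V := {x, y} with hs
      have hxny : x ≠ y := hxy.ne
      have hclique : G.IsClique (s : Set V) := by
        intro a ha b hb hne
        simp only [hs, Finset.coe_insert, Finset.coe_singleton, Set.mem_insert_iff,
          Set.mem_singleton_iff] at ha hb
        rcases ha with rfl | rfl <;> rcases hb with rfl | rfl
        · exact absurd rfl hne
        · exact hxy
        · exact hxy.symm
        · exact absurd rfl hne
      haveI : Fintype ↥{v | v ∉ s} := (Set.toFinite _).fintype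
      have hcard : Fintype.card ↥{v | v ∉ s} + s.card = n := by rw [← hn]; exact aux_card s
      have hs2 : s.card = 2 := Finset.card_pair hxny
      obtain ⟨ν', h1, h2, h3⟩ := IH (Fintype.card ↥{v | v ∉ s}) (by omega) _
        (G.induce {v | v ∉ s}) rfl
      refine ⟨ν' + 1, ?_, ?_, by omega⟩
      · have := cliqueCoverNum_le_induce s hclique; omega
      · have := indepNum_induce_le (G := G) {v | v ∉ s}; omega
    · push_neg at hE
      refine ⟨0, ?_, ?_, by omega⟩
      · simpa using (cliqueCoverNum_le_card_s17 G).trans_eq hn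
      · have hindep : IsIndep G Finset.univ := fun a _ b _ _ => hE a b
        have := le_indepNum hindep
        rw [Finset.card_univ, hn] at this
        omega

lemma alphaN_le_of_cliqueFree {V : Type} [Fintype V] (G : SimpleGraph V) (htf : G.CliqueFree 3)
    {n : ℕ} (hn : Fintype.card V = n) : alphaN n ≤ _root_.indepNum G := by
  have e : Fin n ≃ V := (Fintype.equivFinOfCardEq hn).symm
  have iso : G.comap e ≃g G := isoComap e G
  have hcf : (G.comap e).CliqueFree 3 := htf.comap ⟨iso.toEmbedding.toCopy⟩
  have heq : _root_.indepNum (G.comap ⇑e) = _root_.indepNum G := indepNum_eq_of_iso iso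
  rw [← heq]
  exact Nat.sInf_le ⟨G.comap e, hcf, rfl⟩

lemma key_decomp : ∀ n : ℕ, ∀ (V : Type) [Fintype V], ∀ (G : SimpleGraph V),
    Fintype.card V = n →
    ∃ k m ν aH, n = 3 * k + m ∧ 2 * ν ≤ m ∧ alphaN m ≤ aH ∧ aH ≤ _root_.indepNum G ∧
      m ≤ aH + 2 * ν ∧ cliqueCoverNum G + ν ≤ k + m := by
  intro n
  induction n using Nat.strong_induction_on with
  | _ n IH =>
    intro V _ G hn
    by_cases htf : G.CliqueFree 3
    · obtain ⟨ν, h1, h2, h3⟩ := matching_bound n V G hn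
      exact ⟨0, n, ν, _root_.indepNum G, by omega, h3, alphaN_le_of_cliqueFree G htf hn, le_rfl,
        by omega, by omega⟩
    · simp only [SimpleGraph.CliqueFree, not_forall, not_not] at htf
      obtain ⟨c, hc⟩ := htf
      rw [SimpleGraph.isNClique_iff] at hc
      classical
      haveI : Fintype ↥{v | v ∉ c} := (Set.toFinite _).fintype
      have hcard : Fintype.card ↥{v | v ∉ c} + c.card = n := by rw [← hn]; exact aux_card c
      have h3 : c.card = 3 := hc.2
      obtain ⟨k', m, ν, aH, e1, e2, e3, e4, e5, e6⟩ := IH (Fintype.card ↥{v | v ∉ c})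
        (by omega) _ (G.induce {v | v ∉ c}) rfl
      refine ⟨k' + 1, m, ν, aH, by omega, e2, e3, ?_, e5, ?_⟩
      · exact e4.trans (indepNum_induce_le _)
      · have := cliqueCoverNum_le_induce c hc.1
        omega

section SumLemmas
variable {α β : Type} [Fintype α] [Fintype β] {G : SimpleGraph α} {H : SimpleGraph β}

lemma indepNum_sum : _root_.indepNum (G ⊕g H) = _root_.indepNum G + _root_.indepNum H := by
  classical
  apply le_antisymm
  · obtain ⟨u, hu, huc⟩ := exists_indep (G ⊕g H)
    rw [← huc, ← Finset.card_toLeft_add_card_toRight (u := u)]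
    have hL : IsIndep G u.toLeft := by
      intro a ha b hb hne
      have := hu (x := Sum.inl a) (by simpa using ha) (y := Sum.inl b) (by simpa using hb)
        (by simpa using hne)
      simpa using this
    have hR : IsIndep H u.toRight := by
      intro a ha b hb hne
      have := hu (x := Sum.inr a) (by simpa using ha) (y := Sum.inr b) (by simpa using hb)
        (by simpa using hne)
      simpa using this
    exact Nat.add_le_add (le_indepNum hL) (le_indepNum hR)
  · obtain ⟨s, hs, hsc⟩ := exists_indep G
    obtain ⟨t, ht, htc⟩ := exists_indep H
    have hind : IsIndep (G ⊕g H) (s.disjSum t) := by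
      rintro (a | a) hx (b | b) hy hne <;>
        simp only [Finset.mem_coe, Finset.inl_mem_disjSum, Finset.inr_mem_disjSum] at hx hy
      · have hab : a ≠ b := by simpa using hne
        have := hs (Finset.mem_coe.mpr hx) (Finset.mem_coe.mpr hy) hab
        simpa using this
      · simp
      · simp
      · have hab : a ≠ b := by simpa using hne
        have := ht (Finset.mem_coe.mpr hx) (Finset.mem_coe.mpr hy) hab
        simpa using this
    have := le_indepNum hind
    rwa [Finset.card_disjSum, hsc, htc] at this

lemma sum_clique_oneSided {c : Finset (α ⊕ β)} (hc : (G ⊕g H).IsClique (c : Set (α ⊕ β))) :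
    c.toRight = ∅ ∨ c.toLeft = ∅ := by
  by_contra hcon
  push_neg at hcon
  obtain ⟨h1, h2⟩ := hcon
  obtain ⟨b, hb⟩ := h1
  obtain ⟨a, ha⟩ := h2
  rw [Finset.mem_toRight] at hb
  rw [Finset.mem_toLeft] at ha
  have := hc (Finset.mem_coe.mpr ha) (Finset.mem_coe.mpr hb) (by simp)
  simpa using this

lemma toLeft_clique {c : Finset (α ⊕ β)} (hc : (G ⊕g H).IsClique (c : Set (α ⊕ β))) :
    G.IsClique (c.toLeft : Set α) := by
  intro a ha b hb hne
  have := hc (x := Sum.inl a) (by simpa using ha) (y := Sum.inl b) (by simpa using hb)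
    (by simpa using hne)
  simpa using this

lemma toRight_clique {c : Finset (α ⊕ β)} (hc : (G ⊕g H).IsClique (c : Set (α ⊕ β))) :
    H.IsClique (c.toRight : Set β) := by
  intro a ha b hb hne
  have := hc (x := Sum.inr a) (by simpa using ha) (y := Sum.inr b) (by simpa using hb)
    (by simpa using hne)
  simpa using this

lemma cliqueCoverNum_sum : cliqueCoverNum (G ⊕g H) = cliqueCoverNum G + cliqueCoverNum H := by
  classical
  apply le_antisymm
  · obtain ⟨P, hP, hPc⟩ := exists_cover G
    obtain ⟨Q, hQ, hQc⟩ := exists_cover H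
    set inlEmb : α ↪ α ⊕ β := ⟨Sum.inl, Sum.inl_injective⟩
    set inrEmb : β ↪ α ⊕ β := ⟨Sum.inr, Sum.inr_injective⟩
    have hcov : IsCover (G ⊕g H) (P.image (Finset.map inlEmb) ∪ Q.image (Finset.map inrEmb)) := by
      constructor
      · intro c hcm
        rcases Finset.mem_union.mp hcm with hcm | hcm <;>
          · simp only [Finset.mem_image] at hcm
            obtain ⟨c₀, hc₀, rfl⟩ := hcm
            rintro x hx y hy hne
            simp only [Finset.coe_map, Set.mem_image, Finset.mem_coe] at hx hy
            obtain ⟨a, ha, rfl⟩ := hx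
            obtain ⟨b, hb, rfl⟩ := hy
            have hab : a ≠ b := fun h => hne (by rw [h])
            first
              | exact hP.1 c₀ hc₀ (Finset.mem_coe.mpr ha) (Finset.mem_coe.mpr hb) hab
              | exact hQ.1 c₀ hc₀ (Finset.mem_coe.mpr ha) (Finset.mem_coe.mpr hb) hab
      · rintro (a | b)
        · obtain ⟨c, hc, hac⟩ := hP.2 a
          exact ⟨c.map inlEmb, Finset.mem_union_left _ (Finset.mem_image_of_mem _ hc),
            Finset.mem_map_of_mem _ hac⟩
        · obtain ⟨c, hc, hbc⟩ := hQ.2 b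
          exact ⟨c.map inrEmb, Finset.mem_union_right _ (Finset.mem_image_of_mem _ hc),
            Finset.mem_map_of_mem _ hbc⟩
    have := cliqueCoverNum_le hcov
    have hcard : (P.image (Finset.map inlEmb) ∪ Q.image (Finset.map inrEmb)).card ≤
        P.card + Q.card :=
      (Finset.card_union_le _ _).trans (Nat.add_le_add Finset.card_image_le Finset.card_image_le)
    omega
  · obtain ⟨P, hP, hPc⟩ := exists_cover (G ⊕g H)
    set PL := P.filter fun c => c.toLeft ≠ ∅
    set PR := P.filter fun c => c.toRight ≠ ∅
    have hGle : cliqueCoverNum G ≤ PL.card := by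
      have hcov : IsCover G (PL.image Finset.toLeft) := by
        constructor
        · intro c hcm
          simp only [Finset.mem_image] at hcm
          obtain ⟨c₀, hc₀, rfl⟩ := hcm
          exact toLeft_clique (hP.1 c₀ (Finset.mem_of_mem_filter _ hc₀))
        · intro a
          obtain ⟨c, hc, hac⟩ := hP.2 (Sum.inl a)
          refine ⟨c.toLeft, Finset.mem_image_of_mem _ ?_, by simpa using hac⟩
          refine Finset.mem_filter.mpr ⟨hc, ?_⟩
          intro hemp
          have : a ∈ c.toLeft := by simpa using hac
          simp [hemp] at this
      exact (cliqueCoverNum_le hcov).trans Finset.card_image_le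
    have hHle : cliqueCoverNum H ≤ PR.card := by
      have hcov : IsCover H (PR.image Finset.toRight) := by
        constructor
        · intro c hcm
          simp only [Finset.mem_image] at hcm
          obtain ⟨c₀, hc₀, rfl⟩ := hcm
          exact toRight_clique (hP.1 c₀ (Finset.mem_of_mem_filter _ hc₀))
        · intro b
          obtain ⟨c, hc, hbc⟩ := hP.2 (Sum.inr b)
          refine ⟨c.toRight, Finset.mem_image_of_mem _ ?_, by simpa using hbc⟩
          refine Finset.mem_filter.mpr ⟨hc, ?_⟩
          intro hemp
          have : b ∈ c.toRight := by simpa using hbc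
          simp [hemp] at this
      exact (cliqueCoverNum_le hcov).trans Finset.card_image_le
    have hdisj : Disjoint PL PR := by
      rw [Finset.disjoint_left]
      intro c hcL hcR
      have h1 := (Finset.mem_filter.mp hcL).2
      have h2 := (Finset.mem_filter.mp hcR).2
      rcases sum_clique_oneSided (hP.1 c (Finset.mem_of_mem_filter _ hcL)) with h | h
      · exact h2 h
      · exact h1 h
    have hsub : PL ∪ PR ⊆ P := Finset.union_subset (Finset.filter_subset _ _)
      (Finset.filter_subset _ _)
    have := Finset.card_union_of_disjoint hdisj
    have := Finset.card_le_card hsub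
    omega

end SumLemmas

section Small
variable {V : Type*} [Fintype V] {G : SimpleGraph V}

lemma isIndep_of_forall {s : Finset V} (h : ∀ a ∈ s, ∀ b ∈ s, a ≠ b → ¬ G.Adj a b) :
    IsIndep G s := fun a ha b hb hne =>
  h a (Finset.mem_coe.mp ha) b (Finset.mem_coe.mp hb) hne

lemma isClique_of_forall {s : Finset V} (h : ∀ a ∈ s, ∀ b ∈ s, a ≠ b → G.Adj a b) :
    G.IsClique (s : Set V) := fun a ha b hb hne =>
  h a (Finset.mem_coe.mp ha) b (Finset.mem_coe.mp hb) hne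

end Small

def C5 : SimpleGraph (Fin 5) where
  Adj i j := j = i + 1 ∨ i = j + 1
  symm := ⟨fun _ _ h => h.symm⟩
  loopless := ⟨by intro i; fin_cases i <;> decide⟩

instance : DecidableRel C5.Adj := fun _ _ => inferInstanceAs (Decidable (_ ∨ _))

lemma indepNum_C5 : _root_.indepNum C5 = 2 := by
  apply le_antisymm
  · unfold _root_.indepNum
    refine csSup_le ?_ ?_
    · exact ⟨0, ∅, by simp, by simp⟩
    rintro n ⟨s, hs, rfl⟩
    have h : ∀ a ∈ s, ∀ b ∈ s, a ≠ b → ¬ C5.Adj a b := fun a ha b hb hne =>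
      hs (Finset.mem_coe.mpr ha) (Finset.mem_coe.mpr hb) hne
    have hall : ∀ u : Finset (Fin 5), (∀ a ∈ u, ∀ b ∈ u, a ≠ b → ¬ C5.Adj a b) →
        u.card ≤ 2 := by decide
    exact hall s h
  · have h : IsIndep C5 ({0, 2} : Finset (Fin 5)) := isIndep_of_forall (by decide)
    have := le_indepNum h
    simpa using this

lemma C5_clique_card {s : Finset (Fin 5)} (hs : C5.IsClique (s : Set (Fin 5))) : s.card ≤ 2 := by
  have h : ∀ a ∈ s, ∀ b ∈ s, a ≠ b → C5.Adj a b := fun a ha b hb hne =>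
    hs (Finset.mem_coe.mpr ha) (Finset.mem_coe.mpr hb) hne
  have hall : ∀ u : Finset (Fin 5), (∀ a ∈ u, ∀ b ∈ u, a ≠ b → C5.Adj a b) →
      u.card ≤ 2 := by decide
  exact hall s h

lemma C5_cliqueFree : C5.CliqueFree 3 := by
  intro t ht
  rw [SimpleGraph.isNClique_iff] at ht
  have := C5_clique_card ht.1
  omega

lemma cliqueCoverNum_C5 : cliqueCoverNum C5 = 3 := by
  classical
  apply le_antisymm
  · have hcov : IsCover C5 ({{0, 1}, {2, 3}, {4}} : Finset (Finset (Fin 5))) := by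
      constructor
      · intro c hc
        simp only [Finset.mem_insert, Finset.mem_singleton] at hc
        rcases hc with rfl | rfl | rfl <;> exact isClique_of_forall (by decide)
      · decide
    have := cliqueCoverNum_le hcov
    have hc : ({{0, 1}, {2, 3}, {4}} : Finset (Finset (Fin 5))).card = 3 := by decide
    omega
  · obtain ⟨P, hP, hPc⟩ := exists_cover C5
    have hsub : (Finset.univ : Finset (Fin 5)) ⊆ P.biUnion id := by
      intro v _
      obtain ⟨c, hc, hvc⟩ := hP.2 v
      exact Finset.mem_biUnion.mpr ⟨c, hc, hvc⟩
    have h5 : (5 : ℕ) ≤ (P.biUnion id).card := by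
      have := Finset.card_le_card hsub
      simpa using this
    have hb : (P.biUnion id).card ≤ ∑ c ∈ P, c.card := Finset.card_biUnion_le
    have hbb : ∑ c ∈ P, c.card ≤ ∑ _c ∈ P, 2 :=
      Finset.sum_le_sum fun c hc => C5_clique_card (hP.1 c hc)
    rw [Finset.sum_const, smul_eq_mul] at hbb
    omega

lemma indepNum_top2 : _root_.indepNum (⊤ : SimpleGraph (Fin 2)) = 1 := by
  apply le_antisymm
  · unfold _root_.indepNum
    refine csSup_le ?_ ?_
    · exact ⟨0, ∅, by simp, by simp⟩
    rintro n ⟨s, hs, rfl⟩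
    have h : ∀ a ∈ s, ∀ b ∈ s, a ≠ b → ¬ (⊤ : SimpleGraph (Fin 2)).Adj a b := fun a ha b hb hne =>
      hs (Finset.mem_coe.mpr ha) (Finset.mem_coe.mpr hb) hne
    have hall : ∀ u : Finset (Fin 2),
        (∀ a ∈ u, ∀ b ∈ u, a ≠ b → ¬ (⊤ : SimpleGraph (Fin 2)).Adj a b) → u.card ≤ 1 := by decide
    exact hall s h
  · have h : IsIndep (⊤ : SimpleGraph (Fin 2)) ({0} : Finset (Fin 2)) :=
      isIndep_of_forall (by decide)
    have := le_indepNum h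
    simpa using this

lemma cliqueFree_sum {α β : Type} [Fintype α] [Fintype β] {G : SimpleGraph α} {H : SimpleGraph β} {n : ℕ}
    (hG : G.CliqueFree n) (hH : H.CliqueFree n) : (G ⊕g H).CliqueFree n := by
  intro c hc
  rw [SimpleGraph.isNClique_iff] at hc
  obtain ⟨hcl, hcc⟩ := hc
  have hcard := Finset.card_toLeft_add_card_toRight (u := c)
  rcases sum_clique_oneSided hcl with h | h
  · refine hG c.toLeft ?_
    rw [SimpleGraph.isNClique_iff]
    refine ⟨toLeft_clique hcl, ?_⟩
    rw [h] at hcard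
    simp at hcard
    omega
  · refine hH c.toRight ?_
    rw [SimpleGraph.isNClique_iff]
    refine ⟨toRight_clique hcl, ?_⟩
    rw [h] at hcard
    simp at hcard
    omega

lemma alphaN_exists (n : ℕ) :
    ∃ G : SimpleGraph (Fin n), G.CliqueFree 3 ∧ _root_.indepNum G = alphaN n := by
  have h := Nat.sInf_mem (s := {k | ∃ G : SimpleGraph (Fin n), G.CliqueFree 3 ∧ _root_.indepNum G = k})
    ⟨_root_.indepNum (⊥ : SimpleGraph (Fin n)), ⊥, SimpleGraph.cliqueFree_bot (by norm_num), rfl⟩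
  obtain ⟨G, h1, h2⟩ := h
  exact ⟨G, h1, h2⟩

lemma alphaN_zero : alphaN 0 = 0 := by
  obtain ⟨G, -, hα⟩ := alphaN_exists 0
  have := indepNum_le_card G
  simp at this
  omega

lemma alphaN_mono {a b : ℕ} (h : a ≤ b) : alphaN a ≤ alphaN b := by
  obtain ⟨G, hcf, hα⟩ := alphaN_exists b
  set f : Fin a ↪ Fin b := ⟨Fin.castLE h, Fin.castLE_injective h⟩
  have emb := embComap f G
  have hcf' : (G.comap f).CliqueFree 3 := hcf.comap ⟨emb.toCopy⟩
  have h1 : alphaN a ≤ _root_.indepNum (G.comap f) := Nat.sInf_le ⟨_, hcf', rfl⟩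
  exact h1.trans ((indepNum_le_of_embedding emb).trans hα.le)

lemma alphaN_add_two (a : ℕ) : alphaN (a + 2) ≤ alphaN a + 1 := by
  obtain ⟨G, hcf, hα⟩ := alphaN_exists a
  set S := G ⊕g (⊤ : SimpleGraph (Fin 2)) with hS
  have hScf : S.CliqueFree 3 :=
    cliqueFree_sum hcf (SimpleGraph.cliqueFree_of_card_lt (by simp))
  have hSα : _root_.indepNum S = alphaN a + 1 := by rw [hS, indepNum_sum, hα, indepNum_top2]
  have e : Fin (a + 2) ≃ (Fin a ⊕ Fin 2) := finSumFinEquiv.symm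
  have iso := isoComap e S
  have h1 : alphaN (a + 2) ≤ _root_.indepNum (S.comap e) :=
    Nat.sInf_le ⟨_, hScf.comap ⟨iso.toEmbedding.toCopy⟩, rfl⟩
  rw [indepNum_eq_of_iso iso, hSα] at h1
  exact h1

lemma alphaN_add_mul (m k : ℕ) : alphaN (m + 2 * k) ≤ alphaN m + k := by
  induction k with
  | zero => simp
  | succ k ih =>
    have h3 := alphaN_add_two (m + 2 * k)
    have h4 : m + 2 * (k + 1) = (m + 2 * k) + 2 := by ring
    rw [h4]
    omega

lemma alphaN_le_add {m k t2 : ℕ} (h : t2 ≤ m + 2 * k) : alphaN t2 ≤ alphaN m + k :=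
  (alphaN_mono h).trans (alphaN_add_mul m k)

lemma exists_gap (t : ℕ) : ∃ n : ℕ, ∃ G : SimpleGraph (Fin n), gap G = t := by
  induction t with
  | zero =>
    refine ⟨0, ⊥, ?_⟩
    unfold gap
    have h0 : cliqueCoverNum (⊥ : SimpleGraph (Fin 0)) = 0 := by
      have h := cliqueCoverNum_le (G := (⊥ : SimpleGraph (Fin 0))) (P := ∅)
        ⟨by simp, fun v => v.elim0⟩
      simpa using h
    simp [h0]
  | succ t ih =>
    obtain ⟨n, G, hG⟩ := ih
    set S := G ⊕g C5 with hS
    have hθ : cliqueCoverNum S = cliqueCoverNum G + 3 := by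
      rw [hS, cliqueCoverNum_sum, cliqueCoverNum_C5]
    have hα : _root_.indepNum S = _root_.indepNum G + 2 := by rw [hS, indepNum_sum, indepNum_C5]
    have hle := indepNum_le_cliqueCoverNum G
    have e : Fin (n + 5) ≃ (Fin n ⊕ Fin 5) := finSumFinEquiv.symm
    have iso := isoComap e S
    refine ⟨n + 5, S.comap e, ?_⟩
    unfold gap
    rw [cliqueCoverNum_eq_of_iso iso, indepNum_eq_of_iso iso, hθ, hα]
    unfold gap at hG
    omega

lemma main_bound : ∀ (V : Type) [Fintype V] (G : SimpleGraph V) (t : ℕ),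
    gap G = t → 2 * t + alphaN (2 * t) ≤ Fintype.card V := by
  intro V _ G t hgap
  obtain ⟨k, m, ν, aH, e1, e2, e3, e4, e5, e6⟩ := key_decomp (Fintype.card V) V G rfl
  by_cases ht : t = 0
  · subst ht
    simpa [alphaN_zero] using Nat.zero_le (Fintype.card V)
  · have hθα : cliqueCoverNum G = _root_.indepNum G + t := by
      unfold gap at hgap
      omega
    have halpha : alphaN (2 * t) ≤ alphaN m + k := alphaN_le_add (by omega)
    omega

theorem order_lower_bound_of_gap :
    (∀ (V : Type) [Fintype V] (G : SimpleGraph V) (t : ℕ),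
      gap G = t → 2 * t + alphaN (2 * t) ≤ Fintype.card V) ∧
    ∀ t : ℕ, 2 * t ≤ sFun t := by
  refine ⟨main_bound, ?_⟩
  intro t
  obtain ⟨n, G, hG⟩ := exists_gap t
  have hmem : sFun t ∈ {n | ∃ G : SimpleGraph (Fin n), gap G = t} :=
    Nat.sInf_mem ⟨n, G, hG⟩
  obtain ⟨G₀, hG₀⟩ := hmem
  have h := main_bound (Fin (sFun t)) G₀ t hG₀
  simp only [Fintype.card_fin] at h
  omega
end
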